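/- Let G = (V, ⌢) be a finite graph and k ≥ 1. The following are equivalent: (1) G has a tree decomposition of width < k; (2) G has a k-pebble forest cover. -/

import Mathlib

/-- A tree decomposition of the graph `(V, adj)`: a tree order `(T, le)` (a partial
order with predecessor sets finite chains and a least element), which therefore has
binary meets, together with a labelling `lam : T → Set V` satisfying (TD1)–(TD3). -/
structure TreeDecomp (V : Type) (adj : V → V → Prop) where
  T : Type
  le : T → T → Prop
  refl : ∀ x, le x x
  antisymm : ∀ x y, le x y → le y x → x = y
  trans : ∀ x y z, le x y → le y z → le x z
  pred_finite : ∀ x, {y | le y x}.Finite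
  pred_chain : ∀ x, IsChain le {y | le y x}
  bot : T
  bot_le : ∀ x, le bot x
  meet : T → T → T
  meet_le_left : ∀ x y, le (meet x y) x
  meet_le_right : ∀ x y, le (meet x y) y
  le_meet : ∀ x y z, le z x → le z y → le z (meet x y)
  lam : T → Set V
  td1 : ∀ v, ∃ x, v ∈ lam x
  td2 : ∀ v v', adj v v' → ∃ x, v ∈ lam x ∧ v' ∈ lam x
  td3 : ∀ v x x' y, v ∈ lam x → v ∈ lam x' →
    ((le (meet x x') y ∧ le y x) ∨ (le (meet x x') y ∧ le y x')) → v ∈ lam y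

/-- A `k`-pebble forest cover of the graph `(V, adj)`: a forest order on `V` in which
adjacent vertices are comparable, together with a pebbling function `p : V → {1,…,k}`
such that if `v ⌢ v'` and `v ≤ v'`, then `p(v) ≠ p(w)` for all `w` with `v < w ≤ v'`. -/
structure PebbleForestCover (V : Type) (adj : V → V → Prop) (k : ℕ) where
  le : V → V → Prop
  refl : ∀ a, le a a
  antisymm : ∀ a b, le a b → le b a → a = b
  trans : ∀ a b c, le a b → le b c → le a c
  pred_finite : ∀ a, {b | le b a}.Finite
  pred_chain : ∀ a, IsChain le {b | le b a}
  cover : ∀ a a', adj a a' → le a a' ∨ le a' a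
  peb : V → Fin k
  peb_cond : ∀ v v' w, adj v v' → le v v' → le v w → v ≠ w → le w v' → peb v ≠ peb w

namespace Stmt11Aux

variable {V : Type} {adj : V → V → Prop} {k : ℕ}

section Defs
variable (C : PebbleForestCover V adj k)

/-- Order on `Option V` with `none` as bottom. -/
def ole : Option V → Option V → Prop
  | none, _ => True
  | some _, none => False
  | some a, some b => C.le a b

lemma ole_none_left (x : Option V) : ole C none x := trivial

lemma exists_glb (a b : V) (h : ∃ c, C.le c a ∧ C.le c b) :
    ∃ m, C.le m a ∧ C.le m b ∧ ∀ d, C.le d a → C.le d b → C.le d m := by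
  classical
  letI : Preorder V := { le := C.le, le_refl := C.refl, le_trans := C.trans }
  have hfin : {c | C.le c a ∧ C.le c b}.Finite :=
    (C.pred_finite a).subset fun c hc => hc.1
  obtain ⟨c0, hc0⟩ := h
  obtain ⟨m, hm, hmax⟩ := hfin.toFinset.exists_maximal
    ⟨c0, hfin.mem_toFinset.2 hc0⟩
  rw [Set.Finite.mem_toFinset] at hm
  refine ⟨m, hm.1, hm.2, fun d hda hdb => ?_⟩
  rcases eq_or_ne d m with rfl | hne
  · exact C.refl d
  · rcases C.pred_chain a hda hm.1 hne with h1 | h1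
    · exact h1
    · exfalso
      have hd : d ∈ hfin.toFinset := hfin.mem_toFinset.2 ⟨hda, hdb⟩
      exact hne (C.antisymm d m (hmax hd h1) h1)

open Classical in
/-- Meet on `Option V`. -/
noncomputable def omeet : Option V → Option V → Option V
  | none, _ => none
  | some _, none => none
  | some a, some b =>
    if h : ∃ c, C.le c a ∧ C.le c b then some (Classical.choose (exists_glb C a b h))
    else none

open Classical in
lemma omeet_some (a b : V) :
    omeet C (some a) (some b) =
      if h : ∃ c, C.le c a ∧ C.le c b then some (Classical.choose (exists_glb C a b h))
      else none := rfl

def bag (a : V) : Set V :=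
  {w | C.le w a ∧ ∀ u, C.le w u → w ≠ u → C.le u a → C.peb w ≠ C.peb u}

def olam : Option V → Set V
  | none => ∅
  | some a => bag C a

lemma self_mem_bag (a : V) : a ∈ bag C a :=
  ⟨C.refl a, fun u h1 h2 h3 => absurd (C.antisymm a u h1 h3) h2⟩

lemma bag_injOn (a : V) : Set.InjOn C.peb (bag C a) := by
  intro w hw w' hw' hpeb
  by_contra hne
  rcases C.pred_chain a hw.1 hw'.1 hne with h | h
  · exact hw.2 w' h hne hw'.1 hpeb
  · exact hw'.2 w h (Ne.symm hne) hw.1 hpeb.symm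

lemma bag_finite (a : V) : (bag C a).Finite :=
  Set.Finite.of_finite_image (Set.toFinite _) (bag_injOn C a)

lemma bag_card (a : V) : (bag C a).ncard ≤ k := by
  have h1 : (C.peb '' bag C a).ncard = (bag C a).ncard :=
    Set.ncard_image_of_injOn (bag_injOn C a)
  rw [← h1]
  calc (C.peb '' bag C a).ncard ≤ (Set.univ : Set (Fin k)).ncard :=
        Set.ncard_le_ncard (Set.subset_univ _) Set.finite_univ
    _ = k := by rw [Set.ncard_univ, Nat.card_eq_fintype_card, Fintype.card_fin]

end Defs

theorem backward (C : PebbleForestCover V adj k) (hsym : ∀ a b, adj a b → adj b a) (hfin : Finite V) :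
    ∃ D : TreeDecomp V adj, ∀ x, (D.lam x).Finite ∧ (D.lam x).ncard ≤ k := by
  classical
  haveI := hfin
  haveI := Fintype.ofFinite V
  refine ⟨{
    T := Option V
    le := ole C
    refl := ?_
    antisymm := ?_
    trans := ?_
    pred_finite := fun x => Set.toFinite _
    pred_chain := ?_
    bot := none
    bot_le := fun x => trivial
    meet := omeet C
    meet_le_left := ?_
    meet_le_right := ?_
    le_meet := ?_
    lam := olam C
    td1 := ?_
    td2 := ?_
    td3 := ?_ }, ?_⟩
  · rintro (_ | a)
    · trivial
    · exact C.refl a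
  · rintro (_ | a) (_ | b) h1 h2
    · rfl
    · exact False.elim h2
    · exact False.elim h1
    · exact congrArg some (C.antisymm a b h1 h2)
  · rintro (_ | a) (_ | b) (_ | c) h1 h2 <;>
      first
        | trivial
        | exact False.elim h1
        | exact False.elim h2
        | exact C.trans a b c h1 h2
  · rintro (_ | a)
    · rintro (_ | x) hx (_ | y) hy hne
      · exact absurd rfl hne
      · exact False.elim hy
      · exact False.elim hx
      · exact False.elim hx
    · rintro (_ | x) hx (_ | y) hy hne
      · exact absurd rfl hne
      · exact Or.inl trivial
      · exact Or.inr trivial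
      · have : x ≠ y := fun h => hne (congrArg some h)
        exact C.pred_chain a hx hy this
  · rintro (_ | a) (_ | b) <;> try trivial
    · show ole C (omeet C (some a) (some b)) (some a)
      rw [omeet_some]
      split_ifs with h
      · exact (Classical.choose_spec (exists_glb C a b h)).1
      · trivial
  · rintro (_ | a) (_ | b) <;> try trivial
    · show ole C (omeet C (some a) (some b)) (some b)
      rw [omeet_some]
      split_ifs with h
      · exact (Classical.choose_spec (exists_glb C a b h)).2.1
      · trivial
  · rintro (_ | a) (_ | b) (_ | c) h1 h2 <;>
      first
        | trivial
        | exact False.elim h1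
        | exact False.elim h2
        | skip
    · show ole C (some c) (omeet C (some a) (some b))
      have hex : ∃ d, C.le d a ∧ C.le d b := ⟨c, h1, h2⟩
      rw [omeet_some, dif_pos hex]
      exact (Classical.choose_spec (exists_glb C a b hex)).2.2 c h1 h2
  · intro v
    exact ⟨some v, self_mem_bag C v⟩
  · intro v v' hadj
    rcases C.cover v v' hadj with h | h
    · refine ⟨some v', ⟨h, fun u h1 h2 h3 => ?_⟩, self_mem_bag C v'⟩
      exact C.peb_cond v v' u hadj h h1 h2 h3
    · refine ⟨some v, self_mem_bag C v, ⟨h, fun u h1 h2 h3 => ?_⟩⟩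
      exact C.peb_cond v' v u (hsym v v' hadj) h h1 h2 h3
  · rintro v (_ | a) (_ | a') (_ | b) hv hv' hy
    · exact absurd hv (Set.notMem_empty v)
    · exact absurd hv (Set.notMem_empty v)
    · exact absurd hv (Set.notMem_empty v)
    · exact absurd hv (Set.notMem_empty v)
    · exact absurd hv' (Set.notMem_empty v)
    · exact absurd hv' (Set.notMem_empty v)
    · -- x = some a, x' = some a', y = none : impossible
      have hex : ∃ d, C.le d a ∧ C.le d a' := ⟨v, hv.1, hv'.1⟩
      have hmeet : omeet C (some a) (some a') =
          some (Classical.choose (exists_glb C a a' hex)) := by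
        rw [omeet_some, dif_pos hex]
      rw [hmeet] at hy
      rcases hy with ⟨h1, _⟩ | ⟨h1, _⟩ <;> exact False.elim h1
    · -- main case
      have hex : ∃ d, C.le d a ∧ C.le d a' := ⟨v, hv.1, hv'.1⟩
      have hmeet : omeet C (some a) (some a') =
          some (Classical.choose (exists_glb C a a' hex)) := by
        rw [omeet_some, dif_pos hex]
      rw [hmeet] at hy
      have hvm : C.le v (Classical.choose (exists_glb C a a' hex)) :=
        (Classical.choose_spec (exists_glb C a a' hex)).2.2 v hv.1 hv'.1
      rcases hy with ⟨h1, h2⟩ | ⟨h1, h2⟩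
      · refine ⟨C.trans v _ b hvm h1, fun u hu1 hu2 hu3 => ?_⟩
        exact hv.2 u hu1 hu2 (C.trans u b a hu3 h2)
      · refine ⟨C.trans v _ b hvm h1, fun u hu1 hu2 hu3 => ?_⟩
        exact hv'.2 u hu1 hu2 (C.trans u b a' hu3 h2)
  · rintro (_ | a)
    · simp [olam]
    · exact ⟨bag_finite C a, bag_card C a⟩

section Forward
variable (D : TreeDecomp V adj)

lemma exists_least (v : V) : ∃ m, v ∈ D.lam m ∧ ∀ x, v ∈ D.lam x → D.le m x := by
  classical
  letI : Preorder D.T :=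
    { le := D.le, le_refl := D.refl, le_trans := D.trans }
  obtain ⟨x0, hx0⟩ := D.td1 v
  set M : Set D.T := {y | v ∈ D.lam y ∧ D.le y x0} with hMdef
  have hM : M.Finite := (D.pred_finite x0).subset fun y hy => hy.2
  have hmem : ∀ x, v ∈ D.lam x → D.meet x0 x ∈ M := by
    intro x hx
    exact ⟨D.td3 v x0 x (D.meet x0 x) hx0 hx
      (Or.inl ⟨D.refl _, D.meet_le_left _ _⟩), D.meet_le_left _ _⟩
  obtain ⟨m, hmM, hmin⟩ := hM.toFinset.exists_minimal
    ⟨_, hM.mem_toFinset.2 (hmem x0 hx0)⟩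
  rw [Set.Finite.mem_toFinset] at hmM
  refine ⟨m, hmM.1, fun x hx => ?_⟩
  have hn := hmem x hx
  have hle : D.le m (D.meet x0 x) := by
    rcases eq_or_ne m (D.meet x0 x) with h | h
    · rw [← h]; exact D.refl m
    · rcases D.pred_chain x0 hmM.2 hn.2 h with h1 | h1
      · exact h1
      · by_contra h2
        exact h2 (hmin (hM.mem_toFinset.2 hn) h1)
  exact D.trans m _ x hle (D.meet_le_right x0 x)

theorem forward (hbag : ∀ x, (D.lam x).Finite ∧ (D.lam x).ncard ≤ k)
    (hfin : Finite V) (hk : 1 ≤ k) :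
    Nonempty (PebbleForestCover V adj k) := by
  classical
  haveI := hfin
  haveI := Fintype.ofFinite V
  set t : V → D.T := fun v => Classical.choose (exists_least D v) with ht
  have tmem : ∀ v, v ∈ D.lam (t v) := fun v => (Classical.choose_spec (exists_least D v)).1
  have tle : ∀ v x, v ∈ D.lam x → D.le (t v) x :=
    fun v => (Classical.choose_spec (exists_least D v)).2
  set e : V ≃ Fin (Fintype.card V) := Fintype.equivFin V with he
  set sle : V → V → Prop := fun v w =>
    (D.le (t v) (t w) ∧ t v ≠ t w) ∨ (t v = t w ∧ e v ≤ e w) with hsle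
  have sle_le : ∀ a b, sle a b → D.le (t a) (t b) := by
    rintro a b (⟨h, _⟩ | ⟨h, _⟩)
    · exact h
    · rw [h]; exact D.refl _
  have sle_refl : ∀ v, sle v v := fun v => Or.inr ⟨rfl, le_rfl⟩
  have sle_trans : ∀ a b c, sle a b → sle b c → sle a c := by
    rintro a b c (⟨h1a, h1b⟩ | ⟨h1a, h1b⟩) (⟨h2a, h2b⟩ | ⟨h2a, h2b⟩)
    · refine Or.inl ⟨D.trans _ _ _ h1a h2a, fun h => ?_⟩
      refine h1b (D.antisymm _ _ h1a ?_)
      rw [h]; exact h2a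
    · refine Or.inl ⟨?_, ?_⟩
      · rw [← h2a]; exact h1a
      · rw [← h2a]; exact h1b
    · refine Or.inl ⟨?_, ?_⟩
      · rw [h1a]; exact h2a
      · rw [h1a]; exact h2b
    · exact Or.inr ⟨h1a.trans h2a, le_trans h1b h2b⟩
  have sle_antisymm : ∀ a b, sle a b → sle b a → a = b := by
    rintro a b (⟨h1a, h1b⟩ | ⟨h1a, h1b⟩) (⟨h2a, h2b⟩ | ⟨h2a, h2b⟩)
    · exact absurd (D.antisymm _ _ h1a h2a) h1b
    · exact absurd h2a.symm h1b
    · exact absurd h1a.symm h2b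
    · exact e.injective (le_antisymm h1b h2b)
  have sle_chain : ∀ a, IsChain sle {b | sle b a} := by
    intro w v hv v' hv' hne
    rcases eq_or_ne (t v) (t v') with h | h
    · rcases le_total (e v) (e v') with h1 | h1
      · exact Or.inl (Or.inr ⟨h, h1⟩)
      · exact Or.inr (Or.inr ⟨h.symm, h1⟩)
    · have c1 : t v ∈ {y | D.le y (t w)} := sle_le v w hv
      have c2 : t v' ∈ {y | D.le y (t w)} := sle_le v' w hv'
      rcases D.pred_chain (t w) c1 c2 h with h1 | h1
      · exact Or.inl (Or.inl ⟨h1, h⟩)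
      · exact Or.inr (Or.inl ⟨h1, Ne.symm h⟩)
  have sle_cover : ∀ a a', adj a a' → sle a a' ∨ sle a' a := by
    intro a a' hadj
    obtain ⟨x, hax, ha'x⟩ := D.td2 a a' hadj
    rcases eq_or_ne (t a) (t a') with h | h
    · rcases le_total (e a) (e a') with h1 | h1
      · exact Or.inl (Or.inr ⟨h, h1⟩)
      · exact Or.inr (Or.inr ⟨h.symm, h1⟩)
    · have c1 : t a ∈ {y | D.le y x} := tle a x hax
      have c2 : t a' ∈ {y | D.le y x} := tle a' x ha'x
      rcases D.pred_chain x c1 c2 h with h1 | h1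
      · exact Or.inl (Or.inl ⟨h1, h⟩)
      · exact Or.inr (Or.inl ⟨h1, Ne.symm h⟩)
  -- key lemma: constraint vertices live in the bag at t w
  have key : ∀ v v' w, adj v v' → sle v w → sle w v' → v ∈ D.lam (t w) := by
    intro v v' w hadj h1 h2
    obtain ⟨x, hvx, hv'x⟩ := D.td2 v v' hadj
    have h1' : D.le (t v) (t w) := sle_le v w h1
    have h2' : D.le (t w) (t v') := sle_le w v' h2
    have hx : D.le (t w) x := D.trans _ _ _ h2' (tle v' x hv'x)
    exact D.td3 v (t v) x (t w) (tmem v) hvx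
      (Or.inr ⟨D.trans _ _ _ (D.meet_le_left (t v) x) h1', hx⟩)
  -- strict order and well-foundedness
  set slt : V → V → Prop := fun v w => sle v w ∧ v ≠ w with hslt
  haveI : IsTrans V slt := ⟨by
    rintro a b c ⟨h1, h1'⟩ ⟨h2, h2'⟩
    refine ⟨sle_trans a b c h1 h2, fun h => ?_⟩
    subst h
    exact h1' (sle_antisymm a b h1 h2)⟩
  haveI : IsIrrefl V slt := ⟨fun a h => h.2 rfl⟩
  have hwf : WellFounded slt := Finite.wellFounded_of_trans_of_irrefl slt
  -- free colors
  have hfree : ∀ (w : V) (g : V → Fin k),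
      ∃ c : Fin k, c ∉ g '' {v | slt v w ∧ v ∈ D.lam (t w)} := by
    intro w g
    have hsub : {v | slt v w ∧ v ∈ D.lam (t w)} ⊂ D.lam (t w) := by
      refine ⟨fun v hv => hv.2, fun hsup => ?_⟩
      exact (hsup (tmem w)).1.2 rfl
    have hA : {v | slt v w ∧ v ∈ D.lam (t w)}.Finite :=
      (hbag (t w)).1.subset hsub.1
    have hlt : (g '' {v | slt v w ∧ v ∈ D.lam (t w)}).ncard < k := by
      calc (g '' {v | slt v w ∧ v ∈ D.lam (t w)}).ncard
          ≤ {v | slt v w ∧ v ∈ D.lam (t w)}.ncard := Set.ncard_image_le hA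
        _ < (D.lam (t w)).ncard := Set.ncard_lt_ncard hsub (hbag (t w)).1
        _ ≤ k := (hbag (t w)).2
    by_contra hcon
    push_neg at hcon
    have : (g '' {v | slt v w ∧ v ∈ D.lam (t w)}) = Set.univ :=
      Set.eq_univ_of_forall hcon
    rw [this, Set.ncard_univ, Nat.card_eq_fintype_card, Fintype.card_fin] at hlt
    exact lt_irrefl k hlt
  -- greedy coloring by well-founded recursion
  set F : ∀ w : V, (∀ v, slt v w → Fin k) → Fin k := fun w ih =>
    Classical.choose (hfree w (fun v => if h : slt v w then ih v h else ⟨0, hk⟩)) with hF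
  set p : V → Fin k := hwf.fix F with hp
  have pspec : ∀ w v, slt v w → v ∈ D.lam (t w) → p v ≠ p w := by
    intro w v hvw hmem heq
    have hpw : p w = Classical.choose
        (hfree w (fun v => if h : slt v w then p v else ⟨0, hk⟩)) := hwf.fix_eq F w
    have hspec := Classical.choose_spec
      (hfree w (fun v => if h : slt v w then p v else ⟨0, hk⟩))
    apply hspec
    refine ⟨v, ⟨hvw, hmem⟩, ?_⟩
    beta_reduce
    rw [dif_pos hvw, heq, hpw]
  refine ⟨{
    le := sle
    refl := sle_refl
    antisymm := sle_antisymm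
    trans := sle_trans
    pred_finite := fun a => Set.toFinite _
    pred_chain := sle_chain
    cover := sle_cover
    peb := p
    peb_cond := fun v v' w hadj h1 h2 hne h3 =>
      pspec w v ⟨h2, hne⟩ (key v v' w hadj h2 h3) }⟩

end Forward

end Stmt11Aux

/-- A finite graph has a tree decomposition of width `< k` iff it has a `k`-pebble
forest cover. -/



theorem stmt11 (V : Type) (adj : V → V → Prop)
    (hsym : ∀ a b, adj a b → adj b a) (hirr : ∀ a, ¬ adj a a)
    (hfin : Finite V) (k : ℕ) (hk : 1 ≤ k) :
    (∃ D : TreeDecomp V adj, ∀ x, (D.lam x).Finite ∧ (D.lam x).ncard ≤ k) ↔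
    Nonempty (PebbleForestCover V adj k) := by
  constructor
  · rintro ⟨D, hD⟩
    exact Stmt11Aux.forward D hD hfin hk
  · rintro ⟨C⟩
    exact Stmt11Aux.backward C hsym hfin
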